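/- Let G be a finite group and x ∈ G. Define S_G(x) = {g ∈ G : ⟨x⟩ is subnormal in ⟨x, g⟩} and spr_G(x) = |S_G(x)|/|G|, and spr(G) = (1/|G|)·Σ_{x∈G} spr_G(x). If N is a normal subgroup of G, then spr(G/N) ≥ spr(G). -/

import Mathlib

open Subgroup

/-- `H` is normal in `K` (both subgroups of an ambient group). -/
def NormalIn {G : Type*} [Group G] (H K : Subgroup G) : Prop :=
  H ≤ K ∧ (H.subgroupOf K).Normal

/-- `H` is subnormal in `K`: there is a chain `H = H₀ ⊴ H₁ ⊴ ⋯ ⊴ Hₙ = K`. -/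
def IsSubnormalIn {G : Type*} [Group G] (H K : Subgroup G) : Prop :=
  Relation.ReflTransGen NormalIn H K

/-- The Wielandt subnormalizer of `⟨x⟩` in `G`. -/
def subnormalizerSet {G : Type*} [Group G] (x : G) : Set G :=
  {g : G | IsSubnormalIn (zpowers x) (zpowers x ⊔ zpowers g)}

/-- `spr_G(x) = |S_G(x)|/|G|`. -/
noncomputable def spr {G : Type*} [Group G] (x : G) : ℚ :=
  (Nat.card (subnormalizerSet x) : ℚ) / (Nat.card G : ℚ)

/-- `spr(G)`: the average of `spr_G(x)` over `x ∈ G`. -/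
noncomputable def sprGrp (G : Type*) [Group G] [Finite G] : ℚ :=
  letI := Fintype.ofFinite G
  (∑ x : G, spr x) / (Nat.card G : ℚ)

lemma normalIn_iff {G : Type*} [Group G] {A B : Subgroup G} :
    NormalIn A B ↔ A ≤ B ∧ ∀ b ∈ B, ∀ a ∈ A, b * a * b⁻¹ ∈ A := by
  constructor
  · rintro ⟨hle, hn⟩
    refine ⟨hle, fun b hb a ha => ?_⟩
    have := hn.conj_mem ⟨a, hle ha⟩ (by simpa [Subgroup.mem_subgroupOf]) ⟨b, hb⟩
    simpa [Subgroup.mem_subgroupOf] using this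
  · rintro ⟨hle, h⟩
    refine ⟨hle, ⟨?_⟩⟩
    rintro ⟨a, haB⟩ ha ⟨b, hb⟩
    rw [Subgroup.mem_subgroupOf] at ha ⊢
    exact h b hb a ha

lemma normalIn_map {G H : Type*} [Group G] [Group H] (f : G →* H) {A B : Subgroup G}
    (h : NormalIn A B) : NormalIn (A.map f) (B.map f) := by
  rw [normalIn_iff] at h ⊢
  refine ⟨Subgroup.map_mono h.1, ?_⟩
  rintro _ ⟨b, hb, rfl⟩ _ ⟨a, ha, rfl⟩
  exact ⟨b * a * b⁻¹, h.2 b hb a ha, by simp⟩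

lemma isSubnormalIn_map {G H : Type*} [Group G] [Group H] (f : G →* H) {A B : Subgroup G}
    (h : IsSubnormalIn A B) : IsSubnormalIn (A.map f) (B.map f) := by
  unfold IsSubnormalIn at h ⊢
  exact Relation.ReflTransGen.lift (fun S => Subgroup.map f S) (fun _ _ hn => normalIn_map f hn) _ _ h

lemma mem_subnormalizer_map {G : Type*} [Group G] (N : Subgroup G) [N.Normal] {x g : G}
    (h : g ∈ subnormalizerSet x) :
    (QuotientGroup.mk g : G ⧸ N) ∈ subnormalizerSet (QuotientGroup.mk x : G ⧸ N) := by
  have := isSubnormalIn_map (QuotientGroup.mk' N) h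
  simpa [subnormalizerSet, Subgroup.map_sup, MonoidHom.map_zpowers] using this

lemma spr_nonneg {G : Type*} [Group G] (x : G) : 0 ≤ spr x :=
  div_nonneg (by positivity) (by positivity)

lemma spr_le {G : Type*} [Group G] [Finite G] (N : Subgroup G) [N.Normal] (x : G) :
    spr x ≤ spr (QuotientGroup.mk x : G ⧸ N) := by
  have hNpos : 0 < (Nat.card N : ℚ) := by
    exact_mod_cast Nat.card_pos
  have hQpos : 0 < (Nat.card (G ⧸ N) : ℚ) := by
    exact_mod_cast Nat.card_pos
  have hsub : subnormalizerSet x ⊆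
      (QuotientGroup.mk : G → G ⧸ N) ⁻¹' subnormalizerSet (QuotientGroup.mk x : G ⧸ N) :=
    fun g hg => mem_subnormalizer_map N hg
  have hcard : Nat.card (subnormalizerSet x) ≤
      Nat.card N * Nat.card (subnormalizerSet (QuotientGroup.mk x : G ⧸ N)) := by
    calc Nat.card (subnormalizerSet x)
        ≤ Nat.card ((QuotientGroup.mk : G → G ⧸ N) ⁻¹'
            subnormalizerSet (QuotientGroup.mk x : G ⧸ N)) :=
          Nat.card_mono (Set.toFinite _) hsub
      _ = Nat.card N * Nat.card (subnormalizerSet (QuotientGroup.mk x : G ⧸ N)) := by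
          rw [Nat.card_congr (QuotientGroup.preimageMkEquivSubgroupProdSet N _), Nat.card_prod]
  have hGcard : (Nat.card G : ℚ) = (Nat.card (G ⧸ N) : ℚ) * (Nat.card N : ℚ) := by
    exact_mod_cast congrArg (Nat.cast : ℕ → ℚ)
      (Subgroup.card_eq_card_quotient_mul_card_subgroup N)
  unfold spr
  rw [hGcard, div_le_div_iff₀ (by positivity) hQpos]
  have : (Nat.card (subnormalizerSet x) : ℚ) ≤
      (Nat.card N : ℚ) * (Nat.card (subnormalizerSet (QuotientGroup.mk x : G ⧸ N)) : ℚ) := by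
    exact_mod_cast hcard
  nlinarith [hQpos, this]

theorem stmt1 {G : Type*} [Group G] [Finite G] (N : Subgroup G) [N.Normal] :
    sprGrp G ≤ sprGrp (G ⧸ N) := by
  classical
  letI : Fintype G := Fintype.ofFinite G
  letI : Fintype (G ⧸ N) := Fintype.ofFinite _
  have hNpos : 0 < (Nat.card N : ℚ) := by exact_mod_cast Nat.card_pos
  have hQpos : 0 < (Nat.card (G ⧸ N) : ℚ) := by exact_mod_cast Nat.card_pos
  have hGcard : (Nat.card G : ℚ) = (Nat.card (G ⧸ N) : ℚ) * (Nat.card N : ℚ) := by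
    exact_mod_cast congrArg (Nat.cast : ℕ → ℚ)
      (Subgroup.card_eq_card_quotient_mul_card_subgroup N)
  have hfiber : ∀ y : G ⧸ N,
      (Fintype.card {x : G // (QuotientGroup.mk x : G ⧸ N) = y} : ℚ) = (Nat.card N : ℚ) := by
    intro y
    have : Nat.card {x : G // (QuotientGroup.mk x : G ⧸ N) = y} = Nat.card N := by
      have e1 : {x : G // (QuotientGroup.mk x : G ⧸ N) = y} ≃
          ((QuotientGroup.mk : G → G ⧸ N) ⁻¹' {y}) :=
        Equiv.subtypeEquivRight (fun x => by simp [Set.mem_preimage])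
      rw [Nat.card_congr e1,
        Nat.card_congr (QuotientGroup.preimageMkEquivSubgroupProdSet N {y}), Nat.card_prod]
      simp
    rw [← Nat.card_eq_fintype_card]
    exact_mod_cast congrArg (Nat.cast : ℕ → ℚ) this
  have hsum : ∑ x : G, spr (QuotientGroup.mk x : G ⧸ N) =
      (Nat.card N : ℚ) * ∑ y : G ⧸ N, spr y := by
    rw [← Fintype.sum_fiberwise (fun x : G => (QuotientGroup.mk x : G ⧸ N))
      (fun x => spr (QuotientGroup.mk x : G ⧸ N)), Finset.mul_sum]
    refine Finset.sum_congr rfl fun y _ => ?_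
    have : ∀ i : {x : G // (QuotientGroup.mk x : G ⧸ N) = y},
        spr (QuotientGroup.mk (i : G) : G ⧸ N) = spr y := fun i => by rw [i.2]
    rw [Finset.sum_congr rfl (fun i _ => this i), Finset.sum_const, Finset.card_univ,
      nsmul_eq_mul, hfiber y]
  have hle : ∑ x : G, spr x ≤ ∑ x : G, spr (QuotientGroup.mk x : G ⧸ N) :=
    Finset.sum_le_sum fun x _ => spr_le N x
  show (∑ x : G, spr x) / (Nat.card G : ℚ) ≤ (∑ y : G ⧸ N, spr y) / (Nat.card (G ⧸ N) : ℚ)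
  rw [hGcard]
  calc (∑ x : G, spr x) / ((Nat.card (G ⧸ N) : ℚ) * (Nat.card N : ℚ))
      ≤ ((Nat.card N : ℚ) * ∑ y : G ⧸ N, spr y) /
          ((Nat.card (G ⧸ N) : ℚ) * (Nat.card N : ℚ)) := by
        apply div_le_div_of_nonneg_right (hsum ▸ hle) (by positivity) |>.trans_eq rfl
    _ = (∑ y : G ⧸ N, spr y) / (Nat.card (G ⧸ N) : ℚ) := by
        field_simp
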